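/- arXiv:1402.1619 — 6 statements merged into one kernel-verified Lean document; each statement's English description precedes it below -/
import Mathlib

section
/- Let S : ℝ → ℝ be 1-Lipschitz, let J be a real n×n matrix whose operator norm with respect to the Euclidean norm satisfies ‖J‖ = η < 1, let m ∈ ℝⁿ and let u : ℕ → ℝ be an input sequence. If x, x̃ : ℕ → ℝⁿ are two trajectories of the echo state dynamics xᵢ(t+1) = S((J x(t))ᵢ + mᵢ u(t)) (with the same input u but possibly different initial conditions), then for every t, ‖x(t) − x̃(t)‖ ≤ ηᵗ ‖x(0) − x̃(0)‖; in particular ‖x(t) − x̃(t)‖ → 0 as t → ∞. -/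
/-- If the Euclidean operator norm of the reservoir matrix `J` is `η < 1`
and `S` is 1-Lipschitz, then any two trajectories of the echo state dynamics
`xᵢ(t+1) = S((J x(t))ᵢ + mᵢ u(t))` with the same input contract at rate `η`,
hence converge to each other. -/
theorem echo_state_property_of_opNorm_lt_one
    (n : ℕ) (S : ℝ → ℝ) (hS : LipschitzWith 1 S)
    (J : Matrix (Fin n) (Fin n) ℝ) (m : EuclideanSpace ℝ (Fin n)) (u : ℕ → ℝ)
    (η : ℝ) (hη : ‖Matrix.toEuclideanCLM (𝕜 := ℝ) J‖ = η) (hη1 : η < 1)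
    (x x' : ℕ → EuclideanSpace ℝ (Fin n))
    (hx : ∀ t i, x (t + 1) i = S (J.mulVec (x t) i + m i * u t))
    (hx' : ∀ t i, x' (t + 1) i = S (J.mulVec (x' t) i + m i * u t)) :
    (∀ t, ‖x t - x' t‖ ≤ η ^ t * ‖x 0 - x' 0‖) ∧
      Filter.Tendsto (fun t => ‖x t - x' t‖) Filter.atTop (nhds 0) := by
  have hη0 : 0 ≤ η := hη ▸ norm_nonneg _
  have key : ∀ t, ‖x (t + 1) - x' (t + 1)‖ ≤ η * ‖x t - x' t‖ := by
    intro t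
    have h1 : ‖x (t + 1) - x' (t + 1)‖ ≤
        ‖Matrix.toEuclideanCLM (𝕜 := ℝ) J (x t - x' t)‖ := by
      rw [EuclideanSpace.norm_eq, EuclideanSpace.norm_eq]
      apply Real.sqrt_le_sqrt
      apply Finset.sum_le_sum
      intro i _
      have hlip := hS.dist_le_mul (J.mulVec (x t) i + m i * u t)
        (J.mulVec (x' t) i + m i * u t)
      simp only [NNReal.coe_one, one_mul, Real.dist_eq] at hlip
      have e1 : (x (t+1) - x' (t+1)) i = S (J.mulVec (x t) i + m i * u t)
          - S (J.mulVec (x' t) i + m i * u t) := by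
        simp [hx t i, hx' t i]
      have e2 : (Matrix.toEuclideanCLM (𝕜 := ℝ) J (x t - x' t)) i
          = J.mulVec (x t) i - J.mulVec (x' t) i := by
        have h := congrFun (Matrix.ofLp_toEuclideanCLM (𝕜 := ℝ) J (x t - x' t)) i
        rw [h]
        simp [Matrix.mulVec, dotProduct, Finset.sum_sub_distrib, mul_sub]
      rw [e1, e2]
      have : ‖S (J.mulVec (x t) i + m i * u t) - S (J.mulVec (x' t) i + m i * u t)‖
          ≤ ‖J.mulVec (x t) i - J.mulVec (x' t) i‖ := by
        simpa [Real.norm_eq_abs, Real.dist_eq, add_sub_add_right_eq_sub] using hlip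
      calc ‖S (J.mulVec (x t) i + m i * u t) - S (J.mulVec (x' t) i + m i * u t)‖ ^ 2
          ≤ ‖J.mulVec (x t) i - J.mulVec (x' t) i‖ ^ 2 := by
            exact pow_le_pow_left₀ (norm_nonneg _) this 2
        _ = _ := rfl
    have h2 : ‖Matrix.toEuclideanCLM (𝕜 := ℝ) J (x t - x' t)‖ ≤ η * ‖x t - x' t‖ := by
      rw [← hη]; exact (Matrix.toEuclideanCLM (𝕜 := ℝ) J).le_opNorm _
    linarith
  have main : ∀ t, ‖x t - x' t‖ ≤ η ^ t * ‖x 0 - x' 0‖ := by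
    intro t
    induction t with
    | zero => simp
    | succ t ih =>
      calc ‖x (t + 1) - x' (t + 1)‖ ≤ η * ‖x t - x' t‖ := key t
        _ ≤ η * (η ^ t * ‖x 0 - x' 0‖) := by
            exact mul_le_mul_of_nonneg_left ih hη0
        _ = η ^ (t + 1) * ‖x 0 - x' 0‖ := by ring
  refine ⟨main, ?_⟩
  have htend : Filter.Tendsto (fun t => η ^ t * ‖x 0 - x' 0‖) Filter.atTop (nhds 0) := by
    have := tendsto_pow_atTop_nhds_zero_of_lt_one hη0 hη1
    simpa using this.mul_const ‖x 0 - x' 0‖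
  refine squeeze_zero (fun t => norm_nonneg _) main htend
end

section
/- Let S : ℝ → ℝ be 1-Lipschitz, let J be a real n×n matrix with Euclidean operator norm η, let m ∈ ℝⁿ, u : ℕ → ℝ, and let l, τ ∈ [0,1]. If κ := |1 − lτ| + τη < 1, then any two trajectories x, x̃ : ℕ → ℝⁿ of the leaky echo state dynamics xᵢ(t+1) = (1 − lτ) xᵢ(t) + τ S((J x(t))ᵢ + mᵢ u(t)) with the same input satisfy ‖x(t) − x̃(t)‖ ≤ κᵗ ‖x(0) − x̃(0)‖ for all t, hence ‖x(t) − x̃(t)‖ → 0 as t → ∞. -/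
/-- For the leaky echo state dynamics
`xᵢ(t+1) = (1 − lτ) xᵢ(t) + τ S((J x(t))ᵢ + mᵢ u(t))`, if
`κ = |1 − lτ| + τ‖J‖ < 1` then trajectories with the same input contract at rate `κ`. -/
theorem leaky_echo_state_contraction
    (n : ℕ) (S : ℝ → ℝ) (hS : LipschitzWith 1 S)
    (J : Matrix (Fin n) (Fin n) ℝ) (m : EuclideanSpace ℝ (Fin n)) (u : ℕ → ℝ)
    (l τ : ℝ) (hl : l ∈ Set.Icc (0 : ℝ) 1) (hτ : τ ∈ Set.Icc (0 : ℝ) 1)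
    (η κ : ℝ) (hη : ‖Matrix.toEuclideanCLM (𝕜 := ℝ) J‖ = η)
    (hκ : κ = |1 - l * τ| + τ * η) (hκ1 : κ < 1)
    (x x' : ℕ → EuclideanSpace ℝ (Fin n))
    (hx : ∀ t i, x (t + 1) i = (1 - l * τ) * x t i + τ * S (J.mulVec (x t) i + m i * u t))
    (hx' : ∀ t i, x' (t + 1) i = (1 - l * τ) * x' t i + τ * S (J.mulVec (x' t) i + m i * u t)) :
    (∀ t, ‖x t - x' t‖ ≤ κ ^ t * ‖x 0 - x' 0‖) ∧
      Filter.Tendsto (fun t => ‖x t - x' t‖) Filter.atTop (nhds 0) := by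
  obtain ⟨hτ0, hτ1⟩ := hτ
  have hη0 : 0 ≤ η := hη ▸ norm_nonneg _
  have hκ0 : 0 ≤ κ := by
    rw [hκ]; positivity
  -- one step contraction
  have key : ∀ t, ‖x (t + 1) - x' (t + 1)‖ ≤ κ * ‖x t - x' t‖ := by
    intro t
    set Δ : EuclideanSpace ℝ (Fin n) := x t - x' t with hΔ
    set w : EuclideanSpace ℝ (Fin n) := (WithLp.equiv 2 _).symm fun i =>
      τ * (S (J.mulVec (x t) i + m i * u t) - S (J.mulVec (x' t) i + m i * u t)) with hw
    have hsplit : x (t + 1) - x' (t + 1) = (1 - l * τ) • Δ + w := by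
      ext i
      simp only [PiLp.sub_apply, PiLp.add_apply, PiLp.smul_apply, smul_eq_mul, hx t i, hx' t i,
        hΔ, hw, WithLp.equiv_symm_apply, PiLp.toLp_apply]
      ring
    have hJΔ : ‖Matrix.toEuclideanCLM (𝕜 := ℝ) J Δ‖ ≤ η * ‖Δ‖ := by
      rw [← hη]; exact (Matrix.toEuclideanCLM (𝕜 := ℝ) J).le_opNorm Δ
    have hwle : ‖w‖ ≤ τ * ‖Matrix.toEuclideanCLM (𝕜 := ℝ) J Δ‖ := by
      have hτn : ‖Matrix.toEuclideanCLM (𝕜 := ℝ) J Δ‖ = ‖τ • Matrix.toEuclideanCLM (𝕜 := ℝ) J Δ‖ / τ ∨ τ = 0 := by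
        rcases eq_or_lt_of_le hτ0 with h | h
        · exact Or.inr h.symm
        · left
          rw [norm_smul, Real.norm_eq_abs, abs_of_pos h, mul_div_cancel_left₀ _ h.ne']
      rcases eq_or_lt_of_le hτ0 with h | hτpos
      · have : w = 0 := by
          ext i
          simp [hw, WithLp.equiv_symm_apply, PiLp.toLp_apply, ← h]
        simp [this]
        positivity
      rw [← abs_of_pos hτpos, ← Real.norm_eq_abs, ← norm_smul]
      have : ∀ i, |w i| ≤ |(τ • Matrix.toEuclideanCLM (𝕜 := ℝ) J Δ) i| := by
        intro i
        have hcoord : (Matrix.toEuclideanCLM (𝕜 := ℝ) J Δ) i = J.mulVec Δ i := rfl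
        simp only [hw, WithLp.equiv_symm_apply, PiLp.toLp_apply, PiLp.smul_apply, smul_eq_mul, hcoord,
          abs_mul, abs_of_pos hτpos]
        refine mul_le_mul_of_nonneg_left ?_ hτpos.le
        have hlip := hS (J.mulVec (x t) i + m i * u t) (J.mulVec (x' t) i + m i * u t)
        simp only [ENNReal.coe_one, one_mul, edist_dist, Real.dist_eq] at hlip
        have hlip' : |S (J.mulVec (x t) i + m i * u t) - S (J.mulVec (x' t) i + m i * u t)|
            ≤ |J.mulVec (x t) i + m i * u t - (J.mulVec (x' t) i + m i * u t)| := by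
          have := hS.dist_le_mul (J.mulVec (x t) i + m i * u t) (J.mulVec (x' t) i + m i * u t)
          simpa [Real.dist_eq] using this
        calc |S (J.mulVec (x t) i + m i * u t) - S (J.mulVec (x' t) i + m i * u t)|
            ≤ |J.mulVec (x t) i + m i * u t - (J.mulVec (x' t) i + m i * u t)| := hlip'
          _ = |J.mulVec Δ i| := by
              congr 1
              have : J.mulVec Δ = J.mulVec (x t) - J.mulVec (x' t) := by
                rw [hΔ]
                exact Matrix.mulVec_sub J (x t) (x' t)
              rw [this]
              simp only [Pi.sub_apply]
              ring
      -- conclude norm inequality from coordinatewise bound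
      rw [EuclideanSpace.norm_eq, EuclideanSpace.norm_eq]
      apply Real.sqrt_le_sqrt
      apply Finset.sum_le_sum
      intro i _
      have := this i
      calc ‖w i‖ ^ 2 = |w i| ^ 2 := by rw [Real.norm_eq_abs]
        _ ≤ |(τ • Matrix.toEuclideanCLM (𝕜 := ℝ) J Δ) i| ^ 2 := by
            exact pow_le_pow_left₀ (abs_nonneg _) this 2
        _ = ‖(τ • Matrix.toEuclideanCLM (𝕜 := ℝ) J Δ) i‖ ^ 2 := by rw [Real.norm_eq_abs]
    calc ‖x (t + 1) - x' (t + 1)‖ = ‖(1 - l * τ) • Δ + w‖ := by rw [hsplit]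
      _ ≤ ‖(1 - l * τ) • Δ‖ + ‖w‖ := norm_add_le _ _
      _ ≤ |1 - l * τ| * ‖Δ‖ + τ * (η * ‖Δ‖) := by
          rw [norm_smul, Real.norm_eq_abs]
          exact add_le_add le_rfl (hwle.trans (mul_le_mul_of_nonneg_left hJΔ hτ0))
      _ = κ * ‖Δ‖ := by rw [hκ]; ring
  have hbound : ∀ t, ‖x t - x' t‖ ≤ κ ^ t * ‖x 0 - x' 0‖ := by
    intro t
    induction t with
    | zero => simp
    | succ t ih =>
      calc ‖x (t + 1) - x' (t + 1)‖ ≤ κ * ‖x t - x' t‖ := key t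
        _ ≤ κ * (κ ^ t * ‖x 0 - x' 0‖) := mul_le_mul_of_nonneg_left ih hκ0
        _ = κ ^ (t + 1) * ‖x 0 - x' 0‖ := by ring
  refine ⟨hbound, ?_⟩
  have hκ' : |κ| < 1 := by rwa [abs_of_nonneg hκ0]
  have htend : Filter.Tendsto (fun t => κ ^ t * ‖x 0 - x' 0‖) Filter.atTop (nhds 0) := by
    have := tendsto_pow_atTop_nhds_zero_of_abs_lt_one hκ'
    simpa using this.mul_const ‖x 0 - x' 0‖
  exact squeeze_zero (fun t => norm_nonneg _) hbound htend
end

section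
/- Let S : ℝ → ℝ be defined by S(y) = ∫₀^y exp(−π t²/4) dt. Then for every z ∈ ℝ, (2π)^{−1/2} ∫_ℝ S(z x)² exp(−x²/2) dx = (2/π) · arcsin( π z² / (2 + π z²) ). -/
set_option maxHeartbeats 1000000
open Real Set MeasureTheory

lemma gauss_moment2 {p : ℝ} (hp : 0 < p) :
    ∫ x : ℝ, x ^ 2 * Real.exp (-p * x ^ 2) = Real.sqrt π / (2 * p * Real.sqrt p) := by
  have hint : Integrable (fun x : ℝ => x ^ 2 * Real.exp (-p * x ^ 2)) := by
    have := integrable_rpow_mul_exp_neg_mul_sq hp (by norm_num : (-1:ℝ) < 2)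
    simpa [Real.rpow_natCast] using this
  have heven : ∀ x : ℝ, (fun x : ℝ => x ^ 2 * Real.exp (-p * x ^ 2)) (-x)
      = (fun x : ℝ => x ^ 2 * Real.exp (-p * x ^ 2)) x := by intro x; simp
  have hIoi : ∫ x in Ioi (0:ℝ), x ^ 2 * Real.exp (-p * x ^ 2)
      = Real.sqrt π / (4 * p * Real.sqrt p) := by
    have h := integral_rpow_mul_exp_neg_mul_rpow (by norm_num : (0:ℝ) < 2)
      (by norm_num : (-1:ℝ) < 2) hp
    have hG : Real.Gamma ((2 + 1) / 2) = Real.sqrt π / 2 := by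
      have h12 : ((2:ℝ) + 1) / 2 = 1/2 + 1 := by norm_num
      rw [h12, Real.Gamma_add_one (by norm_num), Real.Gamma_one_half_eq]; ring
    rw [hG] at h
    have h2 : ∀ x ∈ Ioi (0:ℝ), x ^ (2:ℝ) * Real.exp (-p * x ^ (2:ℝ))
        = x ^ 2 * Real.exp (-p * x ^ 2) := by
      intro x hx
      rw [show ((2:ℝ)) = ((2:ℕ):ℝ) by norm_num, Real.rpow_natCast]
    rw [setIntegral_congr_fun measurableSet_Ioi h2] at h
    rw [h]
    have : p ^ (-((2:ℝ) + 1) / 2) = (p * Real.sqrt p)⁻¹ := by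
      rw [show (-((2:ℝ)+1)/2) = -(1 + 1/2) by norm_num, Real.rpow_neg hp.le,
        Real.rpow_add hp, Real.rpow_one, ← Real.sqrt_eq_rpow]
    rw [this]
    have hps : 0 < Real.sqrt p := Real.sqrt_pos.mpr hp
    field_simp
    norm_num
  calc ∫ x : ℝ, x ^ 2 * Real.exp (-p * x ^ 2)
      = (∫ x in Iic (0:ℝ), x ^ 2 * Real.exp (-p * x ^ 2))
        + ∫ x in Ioi (0:ℝ), x ^ 2 * Real.exp (-p * x ^ 2) := by
        rw [← intervalIntegral.integral_Iic_add_Ioi hint.integrableOn hint.integrableOn]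
    _ = 2 * ∫ x in Ioi (0:ℝ), x ^ 2 * Real.exp (-p * x ^ 2) := by
        have : ∫ x in Iic (0:ℝ), x ^ 2 * Real.exp (-p * x ^ 2)
            = ∫ x in Ioi (0:ℝ), x ^ 2 * Real.exp (-p * x ^ 2) := by
          have := integral_comp_neg_Ioi (c := (0:ℝ))
            (f := fun x => x ^ 2 * Real.exp (-p * x ^ 2))
          simp only [neg_zero] at this
          rw [← this]
          congr 1 with x
          simp
        rw [this]; ring
    _ = Real.sqrt π / (2 * p * Real.sqrt p) := by
        rw [hIoi]
        have hps : 0 < Real.sqrt p := Real.sqrt_pos.mpr hp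
        field_simp; ring

lemma gauss_weighted {r : ℝ} (hr : 0 ≤ r) :
    (Real.sqrt (2 * π))⁻¹
        * ∫ x : ℝ, x ^ 2 * Real.exp (-(π * r / 4) * x ^ 2) * Real.exp (-x ^ 2 / 2)
      = ((1 + π * r / 2) * Real.sqrt (1 + π * r / 2))⁻¹ := by
  have hπ := Real.pi_pos
  set p : ℝ := π * r / 4 + 1 / 2 with hpdef
  have hp : 0 < p := by positivity
  have hcomb : ∀ x : ℝ, x ^ 2 * Real.exp (-(π * r / 4) * x ^ 2) * Real.exp (-x ^ 2 / 2)
      = x ^ 2 * Real.exp (-p * x ^ 2) := by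
    intro x
    rw [mul_assoc, ← Real.exp_add]
    congr 2
    ring
  simp_rw [hcomb]
  rw [gauss_moment2 hp]
  have h2p : 1 + π * r / 2 = 2 * p := by ring
  rw [h2p, Real.sqrt_mul (by norm_num : (0:ℝ) ≤ 2) p,
    Real.sqrt_mul (by norm_num : (0:ℝ) ≤ 2) π]
  have hsp : 0 < Real.sqrt p := Real.sqrt_pos.mpr hp
  have hsπ : 0 < Real.sqrt π := Real.sqrt_pos.mpr hπ
  have hs2 : 0 < Real.sqrt 2 := by positivity
  have h22 : Real.sqrt 2 * Real.sqrt 2 = 2 := Real.mul_self_sqrt (by norm_num)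
  field_simp

lemma inner_ftc {a c z : ℝ} (ha : 0 < a) (hc : 0 < c) :
    ∫ v in (0:ℝ)..z, ((c + a * v ^ 2) * Real.sqrt (c + a * v ^ 2))⁻¹
      = z / (c * Real.sqrt (c + a * z ^ 2)) := by
  have hq : ∀ v : ℝ, 0 < c + a * v ^ 2 := fun v => by positivity
  have hderiv : ∀ v : ℝ, HasDerivAt (fun v => v / (c * Real.sqrt (c + a * v ^ 2)))
      (((c + a * v ^ 2) * Real.sqrt (c + a * v ^ 2))⁻¹) v := by
    intro v
    have hqd : HasDerivAt (fun v : ℝ => c + a * v ^ 2) (2 * a * v) v := by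
      have := ((hasDerivAt_pow 2 v).const_mul a).const_add c
      simpa [mul_comm, mul_assoc, mul_left_comm] using this
    have hsq : HasDerivAt (fun v : ℝ => Real.sqrt (c + a * v ^ 2))
        (2 * a * v / (2 * Real.sqrt (c + a * v ^ 2))) v := by
      have h0 := (Real.hasDerivAt_sqrt (ne_of_gt (hq v))).comp v hqd
      simpa [Function.comp_def, div_eq_mul_inv, mul_comm, mul_assoc, mul_left_comm] using h0
    have hden : HasDerivAt (fun v : ℝ => c * Real.sqrt (c + a * v ^ 2))
        (c * (2 * a * v / (2 * Real.sqrt (c + a * v ^ 2)))) v := hsq.const_mul c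
    have hs : 0 < Real.sqrt (c + a * v ^ 2) := Real.sqrt_pos.mpr (hq v)
    have hd := (hasDerivAt_id v).div hden (by positivity)
    refine hd.congr_deriv (Eq.symm ?_)
    set s := Real.sqrt (c + a * v ^ 2) with hsdef
    have hs2 : s ^ 2 = c + a * v ^ 2 := Real.sq_sqrt (hq v).le
    field_simp
    simp only [id_eq]
    linear_combination (-a * v ^ 2) * hs2
  have hcont : Continuous fun v : ℝ => ((c + a * v ^ 2) * Real.sqrt (c + a * v ^ 2))⁻¹ := by
    apply Continuous.inv₀
    · exact (continuous_const.add (continuous_const.mul (continuous_pow 2))).mul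
        (Real.continuous_sqrt.comp (continuous_const.add (continuous_const.mul (continuous_pow 2))))
    · intro v
      have hs : 0 < Real.sqrt (c + a * v ^ 2) := Real.sqrt_pos.mpr (hq v)
      positivity
  rw [intervalIntegral.integral_eq_sub_of_hasDerivAt (fun v _ => hderiv v)
    (hcont.intervalIntegrable 0 z)]
  simp

lemma outer_ftc {a z : ℝ} (ha : 0 < a) :
    ∫ u in (0:ℝ)..z, z * ((1 + a * u ^ 2) * Real.sqrt (1 + a * u ^ 2 + a * z ^ 2))⁻¹
      = a⁻¹ * Real.arctan (a * z ^ 2 / Real.sqrt (1 + 2 * a * z ^ 2)) := by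
  have hq : ∀ u : ℝ, 0 < 1 + a * z ^ 2 + a * u ^ 2 := fun u => by positivity
  have hderiv : ∀ u : ℝ, HasDerivAt
      (fun u => a⁻¹ * Real.arctan (a * z * u / Real.sqrt (1 + a * z ^ 2 + a * u ^ 2)))
      (z * ((1 + a * u ^ 2) * Real.sqrt (1 + a * u ^ 2 + a * z ^ 2))⁻¹) u := by
    intro u
    have hqd : HasDerivAt (fun u : ℝ => 1 + a * z ^ 2 + a * u ^ 2) (2 * a * u) u := by
      have := ((hasDerivAt_pow 2 u).const_mul a).const_add (1 + a * z ^ 2)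
      simpa [mul_comm, mul_assoc, mul_left_comm] using this
    have hsq : HasDerivAt (fun u : ℝ => Real.sqrt (1 + a * z ^ 2 + a * u ^ 2))
        (2 * a * u / (2 * Real.sqrt (1 + a * z ^ 2 + a * u ^ 2))) u := by
      have h0 := (Real.hasDerivAt_sqrt (ne_of_gt (hq u))).comp u hqd
      simpa [Function.comp_def, div_eq_mul_inv, mul_comm, mul_assoc, mul_left_comm] using h0
    have hs : 0 < Real.sqrt (1 + a * z ^ 2 + a * u ^ 2) := Real.sqrt_pos.mpr (hq u)
    have hnum : HasDerivAt (fun u : ℝ => a * z * u) (a * z) u := by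
      simpa using (hasDerivAt_id u).const_mul (a * z)
    have hh : HasDerivAt (fun u : ℝ => a * z * u / Real.sqrt (1 + a * z ^ 2 + a * u ^ 2))
        ((a * z * Real.sqrt (1 + a * z ^ 2 + a * u ^ 2)
          - a * z * u * (2 * a * u / (2 * Real.sqrt (1 + a * z ^ 2 + a * u ^ 2))))
          / (Real.sqrt (1 + a * z ^ 2 + a * u ^ 2)) ^ 2) u := hnum.div hsq (ne_of_gt hs)
    have harc := (Real.hasDerivAt_arctan
      (a * z * u / Real.sqrt (1 + a * z ^ 2 + a * u ^ 2))).comp u hh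
    have hG := harc.const_mul a⁻¹
    refine hG.congr_deriv (Eq.symm ?_)
    set s := Real.sqrt (1 + a * z ^ 2 + a * u ^ 2) with hsdef
    have hs2 : s ^ 2 = 1 + a * z ^ 2 + a * u ^ 2 := Real.sq_sqrt (hq u).le
    have h1u : (0:ℝ) < 1 + a * u ^ 2 := by positivity
    have hswap : 1 + a * u ^ 2 + a * z ^ 2 = 1 + a * z ^ 2 + a * u ^ 2 := by ring
    rw [hswap, ← hsdef]
    field_simp
    linear_combination (-z * a * u ^ 2) * hs2
  have hcont : Continuous fun u : ℝ =>
      z * ((1 + a * u ^ 2) * Real.sqrt (1 + a * u ^ 2 + a * z ^ 2))⁻¹ := by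
    apply Continuous.mul continuous_const
    apply Continuous.inv₀
    · exact (continuous_const.add (continuous_const.mul (continuous_pow 2))).mul
        (Real.continuous_sqrt.comp ((continuous_const.add
          (continuous_const.mul (continuous_pow 2))).add continuous_const))
    · intro u
      have h1u : (0:ℝ) < 1 + a * u ^ 2 := by positivity
      have hs : 0 < Real.sqrt (1 + a * u ^ 2 + a * z ^ 2) := Real.sqrt_pos.mpr (by positivity)
      positivity
  rw [intervalIntegral.integral_eq_sub_of_hasDerivAt (fun u _ => hderiv u)
    (hcont.intervalIntegrable 0 z)]
  have e1 : 1 + a * z ^ 2 + a * z ^ 2 = 1 + 2 * a * z ^ 2 := by ring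
  have e2 : a * z * z = a * z ^ 2 := by ring
  simp [e1, e2]

lemma integrable_x2exp {p : ℝ} (hp : 0 < p) :
    Integrable (fun x : ℝ => x ^ 2 * Real.exp (-p * x ^ 2)) := by
  have := integrable_rpow_mul_exp_neg_mul_sq hp (by norm_num : (-1:ℝ) < 2)
  simpa [Real.rpow_natCast] using this

lemma exp_quad_le_one (A x : ℝ) (hA : 0 ≤ A) : Real.exp (-A * x ^ 2) ≤ 1 := by
  apply Real.exp_le_one_iff.mpr
  rw [neg_mul, neg_nonpos]
  positivity

lemma cont_exp_quad (c : ℝ) : Continuous fun t : ℝ => Real.exp (-(π * t ^ 2 / 4) * c) :=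
  Real.continuous_exp.comp
    ((((continuous_const.mul (continuous_pow 2)).div_const 4).neg).mul continuous_const)

lemma cont_exp_quad' (A : ℝ) : Continuous fun x : ℝ => Real.exp (-A * x ^ 2) :=
  Real.continuous_exp.comp (continuous_const.mul (continuous_pow 2))

lemma arctan_val {P : ℝ} (hP : 0 ≤ P) :
    Real.arctan (P / (2 * Real.sqrt (1 + P))) = Real.arcsin (P / (2 + P)) := by
  set t : ℝ := P / (2 * Real.sqrt (1 + P)) with ht
  have h1P : (0:ℝ) < 1 + P := by linarith
  have hs1P : 0 < Real.sqrt (1 + P) := Real.sqrt_pos.mpr h1P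
  have hsq : Real.sqrt (1 + P) ^ 2 = 1 + P := Real.sq_sqrt h1P.le
  have he : 1 + t ^ 2 = ((2 + P) / (2 * Real.sqrt (1 + P))) ^ 2 := by
    rw [ht, div_pow, div_pow, mul_pow, hsq]
    field_simp
    ring
  have hs : Real.sqrt (1 + t ^ 2) = (2 + P) / (2 * Real.sqrt (1 + P)) := by
    rw [he, Real.sqrt_sq (by positivity)]
  rw [Real.arctan_eq_arcsin, hs, ht]
  congr 1
  have h2P : (2:ℝ) + P ≠ 0 := by positivity
  field_simp

lemma S_eq {z : ℝ} (hz : 0 < z) (x : ℝ) :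
    (∫ t in (0:ℝ)..(z * x), Real.exp (-(π * t ^ 2) / 4))
      = x * ∫ v in Ioc (0:ℝ) z, Real.exp (-(π * v ^ 2 / 4) * x ^ 2) := by
  rcases eq_or_ne x 0 with hx | hx
  · simp [hx]
  · have hsub := intervalIntegral.integral_comp_mul_right
      (f := fun t => Real.exp (-(π * t ^ 2) / 4)) (a := (0:ℝ)) (b := z) hx
    have hcongr : (∫ u in (0:ℝ)..z, Real.exp (-(π * (u * x) ^ 2) / 4))
        = ∫ u in (0:ℝ)..z, Real.exp (-(π * u ^ 2 / 4) * x ^ 2) := by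
      refine intervalIntegral.integral_congr fun u _ => ?_
      rw [show -(π * (u * x) ^ 2) / 4 = -(π * u ^ 2 / 4) * x ^ 2 by ring]
    have hIoc : (∫ u in (0:ℝ)..z, Real.exp (-(π * u ^ 2 / 4) * x ^ 2))
        = ∫ v in Ioc (0:ℝ) z, Real.exp (-(π * v ^ 2 / 4) * x ^ 2) := by
      rw [intervalIntegral.integral_of_le hz.le]
    rw [hcongr, hIoc, zero_mul] at hsub
    rw [hsub, smul_eq_mul, ← mul_assoc, mul_inv_cancel₀ hx, one_mul]

theorem core_eq {z : ℝ} (hz : 0 < z) :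
    (Real.sqrt (2 * π))⁻¹
        * ∫ x : ℝ, (∫ t in (0:ℝ)..(z * x), Real.exp (-(π * t ^ 2) / 4)) ^ 2
            * Real.exp (-x ^ 2 / 2)
      = 2 / π * Real.arcsin (π * z ^ 2 / (2 + π * z ^ 2)) := by
  have hπ := Real.pi_pos
  set μ : Measure ℝ := volume.restrict (Ioc 0 z) with hμ
  haveI : IsFiniteMeasure μ := by
    constructor
    rw [hμ, Measure.restrict_apply_univ]
    simp [Real.volume_Ioc]
  have hμuniv : (μ univ).toReal = z := by
    rw [hμ, Measure.restrict_apply_univ, Real.volume_Ioc, ENNReal.toReal_ofReal (by linarith)]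
    ring
  set I : ℝ → ℝ := fun x => ∫ v, Real.exp (-(π * v ^ 2 / 4) * x ^ 2) ∂μ with hIdef
  set H : ℝ → ℝ → ℝ → ℝ := fun x u v =>
    x ^ 2 * Real.exp (-(π * (u ^ 2 + v ^ 2) / 4) * x ^ 2) * Real.exp (-x ^ 2 / 2) with hHdef
  set F : ℝ → ℝ → ℝ := fun x u =>
    x ^ 2 * Real.exp (-(π * u ^ 2 / 4) * x ^ 2) * Real.exp (-x ^ 2 / 2) * I x with hFdef
  have hIint : ∀ x : ℝ, Integrable (fun v : ℝ => Real.exp (-(π * v ^ 2 / 4) * x ^ 2)) μ :=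
    fun x => (cont_exp_quad (x ^ 2)).integrableOn_Ioc
  have hInonneg : ∀ x, 0 ≤ I x := fun x => integral_nonneg fun v => (Real.exp_pos _).le
  have hIle : ∀ x, I x ≤ z := by
    intro x
    have h1 : I x ≤ ∫ _, (1:ℝ) ∂μ := by
      apply integral_mono (hIint x) (integrable_const 1)
      intro v
      exact exp_quad_le_one _ x (by positivity)
    simpa [integral_const, measureReal_def, hμuniv] using h1
  have hIcont : Continuous I := by
    apply MeasureTheory.continuous_of_dominated (bound := fun _ => (1:ℝ))
    · exact fun x => (cont_exp_quad (x ^ 2)).aestronglyMeasurable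
    · intro x
      filter_upwards with v
      rw [Real.norm_eq_abs, abs_of_pos (Real.exp_pos _)]
      exact exp_quad_le_one _ x (by positivity)
    · exact integrable_const 1
    · filter_upwards with v
      exact cont_exp_quad' (π * v ^ 2 / 4)
  -- Step 1 : pointwise identity
  have step1 : ∀ x : ℝ,
      (∫ t in (0:ℝ)..(z * x), Real.exp (-(π * t ^ 2) / 4)) ^ 2 * Real.exp (-x ^ 2 / 2)
        = ∫ u, F x u ∂μ := by
    intro x
    have hS : (∫ t in (0:ℝ)..(z * x), Real.exp (-(π * t ^ 2) / 4)) = x * I x :=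
      S_eq hz x
    rw [hS]
    have heq : ∫ u, F x u ∂μ = (x ^ 2 * Real.exp (-x ^ 2 / 2) * I x) * I x := by
      rw [hFdef]
      simp only
      rw [show (fun u => x ^ 2 * Real.exp (-(π * u ^ 2 / 4) * x ^ 2)
            * Real.exp (-x ^ 2 / 2) * I x)
          = (fun u => (x ^ 2 * Real.exp (-x ^ 2 / 2) * I x)
            * Real.exp (-(π * u ^ 2 / 4) * x ^ 2)) from funext fun u => by ring]
      rw [integral_const_mul]
    rw [heq]
    ring
  -- Step 1b : F as an integral of H
  have hexp_split : ∀ x u v : ℝ, Real.exp (-(π * (u ^ 2 + v ^ 2) / 4) * x ^ 2)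
      = Real.exp (-(π * u ^ 2 / 4) * x ^ 2) * Real.exp (-(π * v ^ 2 / 4) * x ^ 2) := by
    intro x u v
    rw [← Real.exp_add]
    congr 1
    ring
  have step1b : ∀ x u, F x u = ∫ v, H x u v ∂μ := by
    intro x u
    rw [hFdef, hHdef]
    simp only
    rw [show (fun v => x ^ 2 * Real.exp (-(π * (u ^ 2 + v ^ 2) / 4) * x ^ 2)
          * Real.exp (-x ^ 2 / 2))
        = (fun v => (x ^ 2 * Real.exp (-(π * u ^ 2 / 4) * x ^ 2) * Real.exp (-x ^ 2 / 2))
          * Real.exp (-(π * v ^ 2 / 4) * x ^ 2)) from funext fun v => by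
          rw [hexp_split x u v]; ring]
    rw [integral_const_mul]
  -- integrability on the product for the outer swap
  have hwt : Integrable (fun x : ℝ => x ^ 2 * Real.exp (-(1/2 : ℝ) * x ^ 2)) :=
    integrable_x2exp (by norm_num)
  have hw_eq : ∀ x : ℝ, Real.exp (-x ^ 2 / 2) = Real.exp (-(1/2 : ℝ) * x ^ 2) := by
    intro x; congr 1; ring
  have hFintP : Integrable (Function.uncurry F) (volume.prod μ) := by
    apply Integrable.mono'
      (g := fun p : ℝ × ℝ => (p.1 ^ 2 * Real.exp (-(1/2 : ℝ) * p.1 ^ 2) * z) * 1)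
      ((hwt.mul_const z).mul_prod (integrable_const 1))
    · apply Continuous.aestronglyMeasurable
      apply Continuous.mul
      · apply Continuous.mul
        · apply Continuous.mul (continuous_fst.pow 2)
          exact Real.continuous_exp.comp
            (((((continuous_const.mul (continuous_snd.pow 2)).div_const 4)).neg).mul
              (continuous_fst.pow 2))
        · exact Real.continuous_exp.comp ((continuous_fst.pow 2).neg.div_const 2)
      · exact hIcont.comp continuous_fst
    · filter_upwards with p
      rw [Function.uncurry, hFdef]
      simp only
      rw [Real.norm_eq_abs, mul_one, hw_eq]
      have h1 : (0:ℝ) ≤ Real.exp (-(1/2:ℝ) * p.1 ^ 2) := (Real.exp_pos _).le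
      have h2 := exp_quad_le_one (π * p.2 ^ 2 / 4) p.1 (by positivity)
      have h3 : (0:ℝ) ≤ Real.exp (-(π * p.2 ^ 2 / 4) * p.1 ^ 2) := (Real.exp_pos _).le
      rw [abs_of_nonneg (mul_nonneg (by positivity) (hInonneg p.1))]
      calc p.1 ^ 2 * Real.exp (-(π * p.2 ^ 2 / 4) * p.1 ^ 2)
            * Real.exp (-(1/2:ℝ) * p.1 ^ 2) * I p.1
          ≤ p.1 ^ 2 * 1 * Real.exp (-(1/2:ℝ) * p.1 ^ 2) * z := by
            apply mul_le_mul _ (hIle p.1) (hInonneg p.1) (by positivity)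
            apply mul_le_mul_of_nonneg_right _ h1
            exact mul_le_mul_of_nonneg_left h2 (sq_nonneg _)
        _ = p.1 ^ 2 * Real.exp (-(1/2:ℝ) * p.1 ^ 2) * z := by ring
  -- integrability for the inner swap (for each u)
  have hHintP : ∀ u : ℝ, Integrable (fun p : ℝ × ℝ => H p.1 u p.2) (volume.prod μ) := by
    intro u
    apply Integrable.mono'
      (g := fun p : ℝ × ℝ => (p.1 ^ 2 * Real.exp (-(1/2 : ℝ) * p.1 ^ 2)) * 1)
      (hwt.mul_prod (integrable_const 1))
    · apply Continuous.aestronglyMeasurable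
      rw [hHdef]
      apply Continuous.mul
      · apply Continuous.mul (continuous_fst.pow 2)
        exact Real.continuous_exp.comp
          ((((continuous_const.mul ((continuous_const.add (continuous_snd.pow 2)))).div_const
            4).neg).mul (continuous_fst.pow 2))
      · exact Real.continuous_exp.comp ((continuous_fst.pow 2).neg.div_const 2)
    · filter_upwards with p
      rw [hHdef]
      simp only
      rw [Real.norm_eq_abs, mul_one, hw_eq]
      have h1 : (0:ℝ) ≤ Real.exp (-(1/2:ℝ) * p.1 ^ 2) := (Real.exp_pos _).le
      have h2 := exp_quad_le_one (π * (u ^ 2 + p.2 ^ 2) / 4) p.1 (by positivity)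
      rw [abs_of_nonneg (by positivity)]
      calc p.1 ^ 2 * Real.exp (-(π * (u ^ 2 + p.2 ^ 2) / 4) * p.1 ^ 2)
            * Real.exp (-(1/2:ℝ) * p.1 ^ 2)
          ≤ p.1 ^ 2 * 1 * Real.exp (-(1/2:ℝ) * p.1 ^ 2) := by
            apply mul_le_mul_of_nonneg_right _ h1
            exact mul_le_mul_of_nonneg_left h2 (sq_nonneg _)
        _ = p.1 ^ 2 * Real.exp (-(1/2:ℝ) * p.1 ^ 2) := by ring
  -- the chain of computations
  have swap1 : (∫ x : ℝ, ∫ u, F x u ∂μ) = ∫ u, (∫ x : ℝ, F x u) ∂μ :=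
    integral_integral_swap hFintP
  have swap2 : ∀ u : ℝ, (∫ x : ℝ, ∫ v, H x u v ∂μ) = ∫ v, (∫ x : ℝ, H x u v) ∂μ :=
    fun u => integral_integral_swap (hHintP u)
  have key : (Real.sqrt (2 * π))⁻¹
      * ∫ x : ℝ, (∫ t in (0:ℝ)..(z * x), Real.exp (-(π * t ^ 2) / 4)) ^ 2
          * Real.exp (-x ^ 2 / 2)
      = ∫ u, (∫ v, ((1 + π * (u ^ 2 + v ^ 2) / 2)
          * Real.sqrt (1 + π * (u ^ 2 + v ^ 2) / 2))⁻¹ ∂μ) ∂μ := by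
    rw [show (fun x : ℝ => (∫ t in (0:ℝ)..(z * x), Real.exp (-(π * t ^ 2) / 4)) ^ 2
          * Real.exp (-x ^ 2 / 2)) = fun x => ∫ u, F x u ∂μ from funext step1]
    rw [swap1]
    rw [show (fun u => ∫ x : ℝ, F x u) = fun u => ∫ v, (∫ x : ℝ, H x u v) ∂μ from
      funext fun u => by
        rw [show (fun x : ℝ => F x u) = fun x => ∫ v, H x u v ∂μ from
          funext fun x => step1b x u]
        exact swap2 u]
    rw [← integral_const_mul]
    apply integral_congr_ae
    filter_upwards with u
    rw [← integral_const_mul]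
    apply integral_congr_ae
    filter_upwards with v
    rw [hHdef]
    exact gauss_weighted (by positivity)
  rw [key]
  -- now compute the double integral by FTC
  have inner_val : ∀ u : ℝ, (∫ v, ((1 + π * (u ^ 2 + v ^ 2) / 2)
      * Real.sqrt (1 + π * (u ^ 2 + v ^ 2) / 2))⁻¹ ∂μ)
      = z * ((1 + π / 2 * u ^ 2)
          * Real.sqrt (1 + π / 2 * u ^ 2 + π / 2 * z ^ 2))⁻¹ := by
    intro u
    have hc : 0 < 1 + π / 2 * u ^ 2 := by positivity
    have h1 : (∫ v, ((1 + π * (u ^ 2 + v ^ 2) / 2)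
        * Real.sqrt (1 + π * (u ^ 2 + v ^ 2) / 2))⁻¹ ∂μ)
        = ∫ v in (0:ℝ)..z, (((1 + π / 2 * u ^ 2) + π / 2 * v ^ 2)
            * Real.sqrt ((1 + π / 2 * u ^ 2) + π / 2 * v ^ 2))⁻¹ := by
      rw [intervalIntegral.integral_of_le hz.le]
      apply integral_congr_ae
      filter_upwards with v
      rw [show 1 + π * (u ^ 2 + v ^ 2) / 2 = (1 + π / 2 * u ^ 2) + π / 2 * v ^ 2 by ring]
    rw [h1, inner_ftc (by positivity : (0:ℝ) < π / 2) hc, div_eq_mul_inv]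
  simp_rw [inner_val]
  have outer_val : (∫ u, z * ((1 + π / 2 * u ^ 2)
      * Real.sqrt (1 + π / 2 * u ^ 2 + π / 2 * z ^ 2))⁻¹ ∂μ)
      = (π / 2)⁻¹ * Real.arctan (π / 2 * z ^ 2 / Real.sqrt (1 + 2 * (π / 2) * z ^ 2)) := by
    rw [← outer_ftc (by positivity : (0:ℝ) < π / 2)]
    rw [intervalIntegral.integral_of_le hz.le]
  rw [outer_val]
  have harg : π / 2 * z ^ 2 / Real.sqrt (1 + 2 * (π / 2) * z ^ 2)
      = (π * z ^ 2) / (2 * Real.sqrt (1 + π * z ^ 2)) := by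
    rw [show 1 + 2 * (π / 2) * z ^ 2 = 1 + π * z ^ 2 by ring]
    rw [div_eq_div_iff (by positivity) (by positivity)]
    ring
  rw [harg, arctan_val (by positivity)]
  rw [show ((π:ℝ) / 2)⁻¹ = 2 / π by rw [inv_div]]

/-- Gaussian second moment of the error-function sigmoid
`S(y) = ∫₀^y exp(−πt²/4) dt`:
`(2π)^{−1/2} ∫ S(zx)² e^{−x²/2} dx = (2/π) arcsin(πz²/(2+πz²))`. -/
theorem gaussian_second_moment_erf_sigmoid (z : ℝ) :
    (Real.sqrt (2 * π))⁻¹ *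
        ∫ x : ℝ, (∫ t in (0:ℝ)..(z * x), Real.exp (-(π * t ^ 2) / 4)) ^ 2 *
          Real.exp (-x ^ 2 / 2) =
      2 / π * Real.arcsin (π * z ^ 2 / (2 + π * z ^ 2)) := by
  rcases lt_trichotomy z 0 with hz | hz | hz
  · have hz' : 0 < -z := by linarith
    have h := core_eq hz'
    have hptw : ∀ x : ℝ,
        (∫ t in (0:ℝ)..(z * x), Real.exp (-(π * t ^ 2) / 4)) ^ 2 * Real.exp (-x ^ 2 / 2)
          = (fun y : ℝ => (∫ t in (0:ℝ)..(-z * y), Real.exp (-(π * t ^ 2) / 4)) ^ 2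
              * Real.exp (-y ^ 2 / 2)) (-x) := by
      intro x
      simp only
      rw [show -z * -x = z * x by ring, show ((-x : ℝ)) ^ 2 = x ^ 2 by ring]
    have hint : (∫ x : ℝ, (∫ t in (0:ℝ)..(z * x), Real.exp (-(π * t ^ 2) / 4)) ^ 2
          * Real.exp (-x ^ 2 / 2))
        = ∫ x : ℝ, (∫ t in (0:ℝ)..(-z * x), Real.exp (-(π * t ^ 2) / 4)) ^ 2
          * Real.exp (-x ^ 2 / 2) := by
      rw [show (fun x : ℝ => (∫ t in (0:ℝ)..(z * x), Real.exp (-(π * t ^ 2) / 4)) ^ 2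
            * Real.exp (-x ^ 2 / 2))
          = (fun x : ℝ => (fun y : ℝ =>
              (∫ t in (0:ℝ)..(-z * y), Real.exp (-(π * t ^ 2) / 4)) ^ 2
              * Real.exp (-y ^ 2 / 2)) (-x)) from funext hptw]
      exact integral_neg_eq_self
        (fun y : ℝ => (∫ t in (0:ℝ)..(-z * y), Real.exp (-(π * t ^ 2) / 4)) ^ 2
          * Real.exp (-y ^ 2 / 2)) volume
    rw [hint]
    rw [show π * z ^ 2 = π * (-z) ^ 2 by ring]
    exact h
  · subst hz
    simp
  · exact core_eq hz
end

section
/- The function F : [0,∞) → ℝ defined by F(y) = (2/π) · arcsin( π y / (2 + π y) ) is strictly increasing and concave on [0,∞). -/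
open Real

lemma meanfield_key (y : ℝ) (hy : 0 ≤ y) :
    HasDerivAt (fun y : ℝ => 2 / π * Real.arcsin (π * y / (2 + π * y)))
      (2 / ((2 + π * y) * Real.sqrt (1 + π * y))) y := by
  have hπ := Real.pi_pos
  have hd : (0:ℝ) < 2 + π * y := by positivity
  have hg : HasDerivAt (fun y : ℝ => π * y / (2 + π * y)) (2 * π / (2 + π * y) ^ 2) y := by
    have h1 : HasDerivAt (fun y : ℝ => π * y) π y := by
      simpa using (hasDerivAt_id y).const_mul π
    have h2 : HasDerivAt (fun y : ℝ => 2 + π * y) π y := h1.const_add 2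
    have := h1.div h2 (ne_of_gt hd)
    refine this.congr_deriv ?_
    congr 1
    ring
  set x := π * y / (2 + π * y) with hxdef
  have hx0 : 0 ≤ x := by positivity
  have hx1 : x < 1 := by
    rw [hxdef, div_lt_one hd]; linarith
  have ha : HasDerivAt Real.arcsin (1 / Real.sqrt (1 - x ^ 2)) x :=
    Real.hasDerivAt_arcsin (by linarith) (ne_of_lt hx1)
  have hcomp := (ha.comp y hg).const_mul (2 / π)
  refine hcomp.congr_deriv ?_
  have h1py : (0:ℝ) < 1 + π * y := by positivity
  have hsq : 1 - x ^ 2 = 4 * (1 + π * y) / (2 + π * y) ^ 2 := by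
    rw [hxdef]; field_simp; ring
  have hsqrt : Real.sqrt (1 - x ^ 2) = 2 * Real.sqrt (1 + π * y) / (2 + π * y) := by
    rw [hsq, show (4:ℝ) * (1 + π * y) / (2 + π * y) ^ 2
        = (2 * Real.sqrt (1 + π * y) / (2 + π * y)) ^ 2 from ?_,
      Real.sqrt_sq (by positivity)]
    rw [div_pow, mul_pow, Real.sq_sqrt h1py.le]
    ring
  rw [hsqrt]
  have hs : (0:ℝ) < Real.sqrt (1 + π * y) := Real.sqrt_pos.2 h1py
  field_simp

/-- the mean-field second-moment function
`F(y) = (2/π) arcsin(πy/(2+πy))` is strictly increasing and concave on `[0,∞)`. -/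
theorem meanfield_F_strictMono_and_concave :
    StrictMonoOn (fun y : ℝ => 2 / π * Real.arcsin (π * y / (2 + π * y))) (Set.Ici 0) ∧
      ConcaveOn ℝ (Set.Ici 0) (fun y : ℝ => 2 / π * Real.arcsin (π * y / (2 + π * y))) := by
  have hπ := Real.pi_pos
  have hcont : ContinuousOn (fun y : ℝ => 2 / π * Real.arcsin (π * y / (2 + π * y)))
      (Set.Ici 0) := fun y hy =>
    (meanfield_key y hy).differentiableAt.continuousAt.continuousWithinAt
  have hconv : Convex ℝ (Set.Ici (0:ℝ)) := convex_Ici 0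
  have hint : interior (Set.Ici (0:ℝ)) = Set.Ioi 0 := interior_Ici
  have hderiv : ∀ y ∈ Set.Ioi (0:ℝ),
      deriv (fun y : ℝ => 2 / π * Real.arcsin (π * y / (2 + π * y))) y
        = 2 / ((2 + π * y) * Real.sqrt (1 + π * y)) := fun y hy =>
    (meanfield_key y (le_of_lt hy)).deriv
  constructor
  · apply strictMonoOn_of_deriv_pos hconv hcont
    intro y hy
    rw [hint] at hy
    rw [hderiv y hy]
    have : (0:ℝ) < y := hy
    positivity
  · refine AntitoneOn.concaveOn_of_deriv hconv hcont ?_ ?_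
    · intro a ha
      rw [hint] at ha
      exact (meanfield_key a (le_of_lt ha)).differentiableAt.differentiableWithinAt
    intro a ha b hb hab
    rw [hint] at ha hb
    rw [hderiv a ha, hderiv b hb]
    have ha' : (0:ℝ) < a := ha
    have hb' : (0:ℝ) < b := hb
    have h1 : Real.sqrt (1 + π * a) ≤ Real.sqrt (1 + π * b) :=
      Real.sqrt_le_sqrt (by nlinarith)
    have h2 : (0:ℝ) < Real.sqrt (1 + π * a) := Real.sqrt_pos.2 (by positivity)
    have h3 : (0:ℝ) < 2 + π * a := by positivity
    have h4 : (2 + π * a) * Real.sqrt (1 + π * a) ≤ (2 + π * b) * Real.sqrt (1 + π * b) :=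
      mul_le_mul (by nlinarith) h1 h2.le (by positivity)
    exact div_le_div_of_nonneg_left (by norm_num) (by positivity) h4
end

section
/- Let l, τ ∈ [0,1], α ∈ (0,1], σ ≥ 0, and set F(y) = (2/π)·arcsin(πy/(2+πy)), Ψ(x) = (1 − lτ)² x + τ² F(α σ² x) and μ = (1 − lτ)² + τ² α σ². If μ < 1, then for every initial value x₀ ≥ 0 the iterates xₜ₊₁ = Ψ(xₜ) satisfy xₜ ≤ μᵗ x₀ for all t; in particular xₜ → 0 as t → ∞. -/
open Real

lemma myF_le (y : ℝ) (hy : 0 ≤ y) :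
    2 / π * Real.arcsin (π * y / (2 + π * y)) ≤ y := by
  have hπ := Real.pi_pos
  have hπ4 := Real.pi_lt_d2
  have hden : (0:ℝ) < 2 + π * y := by positivity
  set z := π * y / (2 + π * y) with hz
  have hz0 : 0 ≤ z := by positivity
  have hz1 : z < 1 := by
    rw [hz, div_lt_one hden]; linarith
  rcases eq_or_lt_of_le hy with hy0 | hy0
  · rw [hz, ← hy0]; simp
  set u := π * y / 2 with hu
  have hu0 : 0 < u := by rw [hu]; positivity
  -- goal equivalent to arcsin z ≤ u
  have key : Real.arcsin z ≤ u := by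
    rcases le_or_gt (π / 2) u with h | h
    · exact (Real.arcsin_le_pi_div_two z).trans h
    · have h0 := hu0
      -- z ≤ sin u
      · 
        have hzu : z = u / (1 + u) := by
          rw [hz, hu]; field_simp
        have hsin : z ≤ Real.sin u := by
          rcases le_or_gt u 1 with h1 | h1
          · have := Real.sin_gt_sub_cube h0
            rw [hzu, div_le_iff₀ (by linarith)]
            nlinarith [mul_lt_mul_of_pos_right this (show (0:ℝ) < 1 + u by linarith),
              mul_nonneg (mul_nonneg h0.le h0.le) (show (0:ℝ) ≤ 4 - u - u^2 by nlinarith)]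
          · have hs1 : Real.sin 1 ≤ Real.sin u := by
              apply Real.strictMonoOn_sin.monotoneOn
              · constructor <;> [linarith; linarith]
              · constructor <;> [linarith; linarith]
              · linarith
            have hs1' : (3:ℝ)/4 < Real.sin 1 := by
              have := Real.sin_gt_sub_cube one_pos
              norm_num at this; linarith
            have : z ≤ 3/4 := by
              rw [hzu, div_le_iff₀ (by linarith)]; linarith
            linarith
        have := (Real.arcsin_le_iff_le_sin ⟨by linarith, hz1.le⟩
          ⟨by linarith, h.le⟩).2 hsin
        exact this
  calc 2 / π * Real.arcsin z ≤ 2 / π * u := by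
        apply mul_le_mul_of_nonneg_left key (by positivity)
    _ = y := by rw [hu]; field_simp

lemma myF_nonneg (y : ℝ) (hy : 0 ≤ y) :
    0 ≤ 2 / π * Real.arcsin (π * y / (2 + π * y)) := by
  have hπ := Real.pi_pos
  have : (0:ℝ) ≤ π * y / (2 + π * y) := by positivity
  have := Real.arcsin_nonneg.2 this
  positivity

/-- in the ordered phase `μ = (1−lτ)² + τ²ασ² < 1`, the iterates of the
mean-field variance map `Ψ(x) = (1−lτ)² x + τ² F(ασ²x)` starting from any `x₀ ≥ 0`
satisfy `xₜ ≤ μᵗ x₀`, hence converge to `0`. -/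
theorem meanfield_variance_ordered_phase
    (l τ α σ : ℝ) (hl : l ∈ Set.Icc (0 : ℝ) 1) (hτ : τ ∈ Set.Icc (0 : ℝ) 1)
    (hα : α ∈ Set.Ioc (0 : ℝ) 1) (hσ : 0 ≤ σ)
    (F Ψ : ℝ → ℝ)
    (hF : ∀ y, F y = 2 / π * Real.arcsin (π * y / (2 + π * y)))
    (hΨ : ∀ x, Ψ x = (1 - l * τ) ^ 2 * x + τ ^ 2 * F (α * σ ^ 2 * x))
    (μ : ℝ) (hμ : μ = (1 - l * τ) ^ 2 + τ ^ 2 * α * σ ^ 2) (hμ1 : μ < 1)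
    (x : ℕ → ℝ) (hx0 : 0 ≤ x 0) (hx : ∀ t, x (t + 1) = Ψ (x t)) :
    (∀ t, x t ≤ μ ^ t * x 0) ∧ Filter.Tendsto x Filter.atTop (nhds 0) := by
  have hμ0 : 0 ≤ μ := by
    rw [hμ]
    have : 0 ≤ τ ^ 2 * α * σ ^ 2 := by
      have := hα.1.le
      positivity
    positivity
  -- Ψ x ≤ μ x and 0 ≤ Ψ x for x ≥ 0
  have hstep : ∀ c : ℝ, 0 ≤ c → 0 ≤ Ψ c ∧ Ψ c ≤ μ * c := by
    intro c hc
    have hb : 0 ≤ α * σ ^ 2 * c := by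
      have := hα.1.le; positivity
    constructor
    · rw [hΨ, hF]
      have := myF_nonneg (α * σ ^ 2 * c) hb
      positivity
    · rw [hΨ, hF, hμ]
      have := myF_le (α * σ ^ 2 * c) hb
      nlinarith [sq_nonneg τ]
  have hkey : ∀ t, 0 ≤ x t ∧ x t ≤ μ ^ t * x 0 := by
    intro t
    induction t with
    | zero => simpa using hx0
    | succ n ih =>
      obtain ⟨h0, h1⟩ := ih
      obtain ⟨g0, g1⟩ := hstep (x n) h0
      rw [hx n]
      refine ⟨g0, ?_⟩
      calc Ψ (x n) ≤ μ * x n := g1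
        _ ≤ μ * (μ ^ n * x 0) := by exact mul_le_mul_of_nonneg_left h1 hμ0
        _ = μ ^ (n + 1) * x 0 := by ring
  refine ⟨fun t => (hkey t).2, ?_⟩
  have hlim : Filter.Tendsto (fun t => μ ^ t * x 0) Filter.atTop (nhds 0) := by
    have := tendsto_pow_atTop_nhds_zero_of_lt_one hμ0 hμ1
    simpa using this.mul_const (x 0)
  exact squeeze_zero (fun t => (hkey t).1) (fun t => (hkey t).2) hlim
end

section
/- Let τ ∈ (0,1] and l ∈ (0,1] with lτ ∈ (0,2), let α ∈ (0,1] and σ > 0, and set F(y) = (2/π)·arcsin(πy/(2+πy)), Ψ(x) = (1 − lτ)² x + τ² F(α σ² x) and μ = (1 − lτ)² + τ² α σ². If μ > 1, then Ψ has a unique fixed point x* > 0, and for every initial value x₀ > 0 the iterates xₜ₊₁ = Ψ(xₜ) converge to x* as t → ∞. -/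
open Real

noncomputable def mvF (y : ℝ) : ℝ := 2 / π * Real.arcsin (π * y / (2 + π * y))

lemma mv_denom_pos {y : ℝ} (hy : 0 ≤ y) : 0 < 2 + π * y := by
  nlinarith [Real.pi_pos]

lemma mv_s_nonneg {y : ℝ} (hy : 0 ≤ y) : 0 ≤ π * y / (2 + π * y) :=
  div_nonneg (by nlinarith [Real.pi_pos]) (mv_denom_pos hy).le

lemma mv_s_lt_one {y : ℝ} (hy : 0 ≤ y) : π * y / (2 + π * y) < 1 := by
  rw [div_lt_one (mv_denom_pos hy)]; linarith

lemma mvF_zero : mvF 0 = 0 := by simp [mvF]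

lemma mvF_pos {y : ℝ} (hy : 0 < y) : 0 < mvF y := by
  have := Real.pi_pos
  apply mul_pos (by positivity)
  rw [Real.arcsin_pos]
  exact div_pos (by positivity) (mv_denom_pos hy.le)

lemma mvF_nonneg {y : ℝ} (hy : 0 ≤ y) : 0 ≤ mvF y := by
  rcases eq_or_lt_of_le hy with h | h
  · simp [← h, mvF_zero]
  · exact (mvF_pos h).le

lemma mvF_le_one {y : ℝ} : mvF y ≤ 1 := by
  have hπ := Real.pi_pos
  have h := Real.arcsin_le_pi_div_two (π * y / (2 + π * y))
  calc 2 / π * Real.arcsin (π * y / (2 + π * y)) ≤ 2 / π * (π / 2) := by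
        apply mul_le_mul_of_nonneg_left h (by positivity)
    _ = 1 := by field_simp

lemma mv_sqrt_one_sub_sq {y : ℝ} (hy : 0 ≤ y) :
    Real.sqrt (1 - (π * y / (2 + π * y)) ^ 2) = 2 * Real.sqrt (1 + π * y) / (2 + π * y) := by
  have hπ := Real.pi_pos
  have hd := mv_denom_pos hy
  have h1 : (0:ℝ) ≤ 1 + π * y := by nlinarith
  have : 1 - (π * y / (2 + π * y)) ^ 2 = (2 * Real.sqrt (1 + π * y) / (2 + π * y)) ^ 2 := by
    rw [show (2 * Real.sqrt (1 + π * y) / (2 + π * y)) ^ 2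
        = 2 ^ 2 * Real.sqrt (1 + π * y) ^ 2 / (2 + π * y) ^ 2 from by rw [div_pow, mul_pow],
      Real.sq_sqrt h1]
    field_simp
    ring
  rw [this, Real.sqrt_sq (by positivity)]

lemma mvF_lt_self {y : ℝ} (hy : 0 < y) : mvF y < y := by
  have hπ := Real.pi_pos
  have hd := mv_denom_pos hy.le
  set s := π * y / (2 + π * y) with hs
  have hs0 : 0 < s := div_pos (by positivity) hd
  have hs1 : s < 1 := mv_s_lt_one hy.le
  have ha0 : 0 < Real.arcsin s := Real.arcsin_pos.2 hs0
  have ha1 : Real.arcsin s < π / 2 := Real.arcsin_lt_pi_div_two.2 hs1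
  have htan : Real.arcsin s < Real.tan (Real.arcsin s) := Real.lt_tan ha0 ha1
  rw [Real.tan_arcsin, mv_sqrt_one_sub_sq hy.le] at htan
  have hsq : (1:ℝ) ≤ Real.sqrt (1 + π * y) := by
    nlinarith [Real.sq_sqrt (show (0:ℝ) ≤ 1 + π * y by nlinarith),
      Real.sqrt_nonneg (1 + π * y)]
  have hsqpos : 0 < Real.sqrt (1 + π * y) := by linarith
  have hval : s / (2 * Real.sqrt (1 + π * y) / (2 + π * y)) = π * y / (2 * Real.sqrt (1 + π * y)) := by
    rw [hs]; field_simp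
  rw [hval] at htan
  have h2 : π * y / (2 * Real.sqrt (1 + π * y)) ≤ π * y / 2 := by
    apply div_le_div_of_nonneg_left (by positivity) (by norm_num) (by nlinarith)
  have h3 : Real.arcsin s < π * y / 2 := lt_of_lt_of_le htan h2
  have : mvF y = 2 / π * Real.arcsin s := rfl
  rw [this]
  calc 2 / π * Real.arcsin s < 2 / π * (π * y / 2) := by
        apply mul_lt_mul_of_pos_left h3 (by positivity)
    _ = y := by field_simp

lemma mvF_lb {y : ℝ} (hy : 0 ≤ y) : 2 * y / (2 + π * y) ≤ mvF y := by
  have hπ := Real.pi_pos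
  have hd := mv_denom_pos hy
  set s := π * y / (2 + π * y) with hs
  have hs0 : 0 ≤ s := mv_s_nonneg hy
  have hs1 : s < 1 := mv_s_lt_one hy
  have hle : s ≤ Real.arcsin s := by
    rcases eq_or_lt_of_le hs0 with h | h
    · rw [← h]; simp
    · have := Real.sin_lt (Real.arcsin_pos.2 h)
      rw [Real.sin_arcsin (by linarith) hs1.le] at this
      exact this.le
  have : 2 * y / (2 + π * y) = 2 / π * s := by rw [hs]; field_simp
  rw [this]
  exact mul_le_mul_of_nonneg_left hle (by positivity)

lemma mvF_strictMonoOn : StrictMonoOn mvF (Set.Ici (0:ℝ)) := by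
  intro u hu v hv huv
  have hπ := Real.pi_pos
  simp only [Set.mem_Ici] at hu hv
  have hdu := mv_denom_pos hu
  have hdv := mv_denom_pos hv
  have hg : π * u / (2 + π * u) < π * v / (2 + π * v) := by
    rw [div_lt_div_iff₀ hdu hdv]; nlinarith
  have h1 : π * u / (2 + π * u) ∈ Set.Icc (-1:ℝ) 1 :=
    ⟨by linarith [mv_s_nonneg hu], (mv_s_lt_one hu).le⟩
  have h2 : π * v / (2 + π * v) ∈ Set.Icc (-1:ℝ) 1 :=
    ⟨by linarith [mv_s_nonneg hv], (mv_s_lt_one hv).le⟩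
  exact mul_lt_mul_of_pos_left (Real.strictMonoOn_arcsin h1 h2 hg) (by positivity)
lemma mvF_hasDerivAt {y : ℝ} (hy : 0 ≤ y) :
    HasDerivAt mvF (2 / ((2 + π * y) * Real.sqrt (1 + π * y))) y := by
  have hπ := Real.pi_pos
  have hd := mv_denom_pos hy
  have h1 : (0:ℝ) < 1 + π * y := by nlinarith
  have hsqpos : 0 < Real.sqrt (1 + π * y) := Real.sqrt_pos.2 h1
  have hg : HasDerivAt (fun y : ℝ => π * y / (2 + π * y)) (2 * π / (2 + π * y) ^ 2) y := by
    have hu : HasDerivAt (fun y : ℝ => π * y) π y := by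
      simpa using (hasDerivAt_id y).const_mul π
    have hv : HasDerivAt (fun y : ℝ => 2 + π * y) π y := by
      simpa using ((hasDerivAt_id y).const_mul π).const_add 2
    have := hu.div hv hd.ne'
    refine this.congr_deriv ?_
    field_simp
    ring
  have hs0 := mv_s_nonneg hy
  have hs1 := mv_s_lt_one hy
  have harc : HasDerivAt Real.arcsin
      (1 / Real.sqrt (1 - (π * y / (2 + π * y)) ^ 2)) (π * y / (2 + π * y)) :=
    Real.hasDerivAt_arcsin (by linarith) (by linarith)
  have hcomp := (harc.comp y hg).const_mul (2 / π)
  have heq : mvF = fun y : ℝ => 2 / π * Real.arcsin (π * y / (2 + π * y)) := rfl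
  rw [heq]
  refine hcomp.congr_deriv ?_
  rw [mv_sqrt_one_sub_sq hy]
  field_simp

lemma mvF_continuousAt {y : ℝ} (hy : 0 ≤ y) : ContinuousAt mvF y :=
  (mvF_hasDerivAt hy).continuousAt

lemma mvF_strictConcaveOn : StrictConcaveOn ℝ (Set.Ici (0:ℝ)) mvF := by
  apply StrictAntiOn.strictConcaveOn_of_deriv (convex_Ici 0)
  · intro y hy
    exact (mvF_continuousAt hy).continuousWithinAt
  · rw [interior_Ici]
    intro u hu v hv huv
    simp only [Set.mem_Ioi] at hu hv
    rw [(mvF_hasDerivAt hu.le).deriv, (mvF_hasDerivAt hv.le).deriv]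
    have hπ := Real.pi_pos
    have h1u : (0:ℝ) < 1 + π * u := by nlinarith
    have h1v : (0:ℝ) < 1 + π * v := by nlinarith
    have hsu : 0 < Real.sqrt (1 + π * u) := Real.sqrt_pos.2 h1u
    have hdenom : (2 + π * u) * Real.sqrt (1 + π * u) < (2 + π * v) * Real.sqrt (1 + π * v) := by
      apply mul_lt_mul' (by nlinarith) (Real.sqrt_lt_sqrt h1u.le (by nlinarith)) hsu.le
        (by nlinarith [mv_denom_pos hv.le])
    apply div_lt_div_of_pos_left (by norm_num) (by positivity) hdenom

lemma mvF_ratio {u v : ℝ} (hu : 0 < u) (huv : u < v) : mvF v * u < mvF u * v := by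
  have hv : 0 < v := hu.trans huv
  have ht0 : 0 < u / v := by positivity
  have ht1 : u / v < 1 := (div_lt_one hv).2 huv
  have h := mvF_strictConcaveOn.2 (Set.mem_Ici.2 hv.le) (Set.mem_Ici.2 le_rfl)
    (by exact hv.ne') ht0 (show (0:ℝ) < 1 - u / v by linarith)
    (show u / v + (1 - u / v) = 1 by ring)
  simp only [smul_eq_mul, mul_zero, add_zero, mvF_zero] at h
  have h2 : u / v * mvF v < mvF u := by
    convert h using 2
    · rfl
    · field_simp
  calc mvF v * u = (u / v * mvF v) * v := by field_simp
    _ < mvF u * v := by exact mul_lt_mul_of_pos_right h2 hv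

set_option maxHeartbeats 1600000 in
/-- in the disordered phase `μ = (1−lτ)² + τ²ασ² > 1`, the mean-field
variance map `Ψ(x) = (1−lτ)² x + τ² F(ασ²x)` has a unique fixed point `x* > 0`, and
iterates from any initial value `x₀ > 0` converge to it. -/
theorem meanfield_variance_disordered_phase
    (l τ α σ : ℝ) (hl : l ∈ Set.Ioc (0 : ℝ) 1) (hτ : τ ∈ Set.Ioc (0 : ℝ) 1)
    (hlτ : l * τ ∈ Set.Ioo (0 : ℝ) 2)
    (hα : α ∈ Set.Ioc (0 : ℝ) 1) (hσ : 0 < σ)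
    (F Ψ : ℝ → ℝ)
    (hF : ∀ y, F y = 2 / π * Real.arcsin (π * y / (2 + π * y)))
    (hΨ : ∀ x, Ψ x = (1 - l * τ) ^ 2 * x + τ ^ 2 * F (α * σ ^ 2 * x))
    (μ : ℝ) (hμ : μ = (1 - l * τ) ^ 2 + τ ^ 2 * α * σ ^ 2) (hμ1 : 1 < μ) :
    ∃ xstar : ℝ, 0 < xstar ∧ Ψ xstar = xstar ∧
      (∀ y : ℝ, 0 < y → Ψ y = y → y = xstar) ∧
      ∀ x : ℕ → ℝ, 0 < x 0 → (∀ t, x (t + 1) = Ψ (x t)) →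
        Filter.Tendsto x Filter.atTop (nhds xstar) := by
  obtain ⟨hl0, hl1⟩ := hl
  obtain ⟨hτ0, hτ1⟩ := hτ
  obtain ⟨hlτ0, hlτ2⟩ := hlτ
  obtain ⟨hα0, hα1⟩ := hα
  have hπ := Real.pi_pos
  set a := (1 - l * τ) ^ 2 with hadef
  set c := α * σ ^ 2 with hcdef
  have hc : 0 < c := by positivity
  have ha0 : 0 ≤ a := sq_nonneg _
  have ha1 : a < 1 := by nlinarith
  have h1a : 0 < 1 - a := by linarith
  have hτ2 : 0 < τ ^ 2 := by positivity
  have hμc : μ = a + τ ^ 2 * c := by rw [hμ]; ring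
  have hΨ' : ∀ x, Ψ x = a * x + τ ^ 2 * mvF (c * x) := fun x => by
    rw [hΨ, hF]; rfl
  clear_value a c
  have hΨpos : ∀ x, 0 < x → 0 < Ψ x := by
    intro x hx
    rw [hΨ' x]
    have := mvF_pos (show 0 < c * x by positivity)
    nlinarith
  have hmono : ∀ u v, 0 ≤ u → u < v → Ψ u < Ψ v := by
    intro u v hu huv
    rw [hΨ' u, hΨ' v]
    have h1 : mvF (c * u) < mvF (c * v) :=
      mvF_strictMonoOn (Set.mem_Ici.2 (mul_nonneg hc.le hu))
        (Set.mem_Ici.2 (mul_nonneg hc.le (hu.trans huv.le))) (by nlinarith)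
    nlinarith
  have hmono' : ∀ u v, 0 ≤ u → u ≤ v → Ψ u ≤ Ψ v := by
    intro u v hu huv
    rcases eq_or_lt_of_le huv with h | h
    · rw [h]
    · exact (hmono u v hu h).le
  have hratio : ∀ u v, 0 < u → u < v → Ψ v * u < Ψ u * v := by
    intro u v hu huv
    have h := mvF_ratio (show 0 < c * u by positivity) (show c * u < c * v by nlinarith)
    rw [hΨ' u, hΨ' v]
    have h2 : mvF (c * v) * u < mvF (c * u) * v := by nlinarith
    nlinarith
  have hΨcont : ∀ x, 0 ≤ x → ContinuousAt Ψ x := by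
    intro x hx
    have h1 : ContinuousAt (fun x => a * x + τ ^ 2 * mvF (c * x)) x := by
      apply ContinuousAt.add
      · exact (continuous_const.mul continuous_id).continuousAt
      · exact continuousAt_const.mul
          ((mvF_continuousAt (mul_nonneg hc.le hx)).comp
            (continuous_const.mul continuous_id).continuousAt)
    have heq : Ψ = fun x => a * x + τ ^ 2 * mvF (c * x) := funext hΨ'
    rw [heq]
    exact h1
  -- existence of a fixed point via IVT
  set ε := μ - 1 with hεdef
  have hε0 : 0 < ε := by linarith
  obtain ⟨x₁, hx₁, hπc⟩ : ∃ x₁ : ℝ, 0 < x₁ ∧ π * (c * x₁) = ε / (1 - a) := by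
    refine ⟨ε / ((1 - a) * π * c), div_pos hε0 (by positivity), ?_⟩
    field_simp
  have htc : τ ^ 2 * c = ε + (1 - a) := by rw [hεdef, hμc]; ring
  clear_value ε
  have hφ1 : x₁ < Ψ x₁ := by
    have hcx : 0 ≤ c * x₁ := mul_nonneg hc.le hx₁.le
    have hlb := mvF_lb hcx
    have hd := mv_denom_pos hcx
    have hkey : (1 - a) * (2 + π * (c * x₁)) < 2 * (τ ^ 2 * c) := by
      rw [hπc, htc]
      have heq2 : (1 - a) * (2 + ε / (1 - a)) = 2 * (1 - a) + ε := by
        field_simp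
      rw [heq2]
      linarith only [hε0]
    rw [hΨ' x₁]
    set y := c * x₁ with hy
    set d := 2 + π * y with hd2
    have h6 : (1 - a) * d * x₁ < 2 * (τ ^ 2 * c) * x₁ :=
      mul_lt_mul_of_pos_right hkey hx₁
    have h6' : 2 * (τ ^ 2 * c) * x₁ = 2 * τ ^ 2 * y := by rw [hy]; ring
    have h7 : (1 - a) * x₁ < 2 * τ ^ 2 * y / d := by
      rw [lt_div_iff₀ hd]
      linarith only [h6, h6']
    have h5 : τ ^ 2 * (2 * y / d) ≤ τ ^ 2 * mvF y :=
      mul_le_mul_of_nonneg_left hlb hτ2.le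
    have h5' : τ ^ 2 * (2 * y / d) = 2 * τ ^ 2 * y / d := by ring
    linarith only [h5, h5', h7]
  obtain ⟨x₂, hx₂, hx₂eq⟩ : ∃ x₂ : ℝ, 0 < x₂ ∧ (1 - a) * x₂ = τ ^ 2 + 1 := by
    refine ⟨(τ ^ 2 + 1) / (1 - a), div_pos (by positivity) h1a, ?_⟩
    field_simp
  have hφ2 : Ψ x₂ < x₂ := by
    rw [hΨ' x₂]
    have := mvF_le_one (y := c * x₂)
    nlinarith
  have hx₁₂ : x₁ < x₂ := by
    by_contra h
    push_neg at h
    rcases eq_or_lt_of_le h with heq | hlt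
    · rw [heq] at hφ2; linarith
    · have hr := hratio x₂ x₁ hx₂ hlt
      have A := mul_lt_mul_of_pos_right hφ1 hx₂
      have B := mul_lt_mul_of_pos_right hφ2 hx₁
      have C : x₂ * x₁ = x₁ * x₂ := mul_comm _ _
      linarith only [A, B, C, hr]
  have hcontIcc : ContinuousOn (fun x => Ψ x - x) (Set.Icc x₁ x₂) := by
    intro x hx
    exact ((hΨcont x (le_trans hx₁.le hx.1)).sub continuousAt_id).continuousWithinAt
  have h0mem : (0:ℝ) ∈ Set.Icc ((fun x => Ψ x - x) x₂) ((fun x => Ψ x - x) x₁) :=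
    ⟨show Ψ x₂ - x₂ ≤ 0 by linarith only [hφ2],
     show (0:ℝ) ≤ Ψ x₁ - x₁ by linarith only [hφ1]⟩
  obtain ⟨xstar, hxsmem, hxseq⟩ := intermediate_value_Icc' hx₁₂.le hcontIcc h0mem
  have hxs0 : 0 < xstar := lt_of_lt_of_le hx₁ hxsmem.1
  have hfix : Ψ xstar = xstar := by
    have : Ψ xstar - xstar = 0 := hxseq
    linarith
  have huniq : ∀ y, 0 < y → Ψ y = y → y = xstar := by
    intro y hy hfy
    rcases lt_trichotomy y xstar with h | h | h
    · exfalso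
      have hr := hratio y xstar hy h
      rw [hfy, hfix] at hr
      rw [mul_comm] at hr
      exact lt_irrefl _ hr
    · exact h
    · exfalso
      have hr := hratio xstar y hxs0 h
      rw [hfy, hfix] at hr
      rw [mul_comm] at hr
      exact lt_irrefl _ hr
  have hlimfix : ∀ (x : ℕ → ℝ) (L : ℝ), 0 < L → (∀ t, x (t + 1) = Ψ (x t)) →
      Filter.Tendsto x Filter.atTop (nhds L) → L = xstar := by
    intro x L hL hrec hlim
    have h1 : Filter.Tendsto (fun t => x (t + 1)) Filter.atTop (nhds L) :=
      (Filter.tendsto_add_atTop_iff_nat 1).2 hlim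
    have h2 : Filter.Tendsto (fun t => Ψ (x t)) Filter.atTop (nhds (Ψ L)) :=
      (hΨcont L hL.le).tendsto.comp hlim
    have h3 : Filter.Tendsto (fun t => x (t + 1)) Filter.atTop (nhds (Ψ L)) := by
      simpa only [hrec] using h2
    exact huniq L hL (tendsto_nhds_unique h3 h1)
  refine ⟨xstar, hxs0, hfix, huniq, ?_⟩
  intro x hx0 hrec
  rcases lt_trichotomy (x 0) xstar with hcase | hcase | hcase
  · -- increasing towards xstar
    have hbound : ∀ t, 0 < x t ∧ x t ≤ xstar := by
      intro t
      induction t with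
      | zero => exact ⟨hx0, hcase.le⟩
      | succ n ih =>
        rw [hrec n]
        refine ⟨hΨpos _ ih.1, ?_⟩
        have := hmono' (x n) xstar ih.1.le ih.2
        rwa [hfix] at this
    have hmonox : Monotone x := by
      apply monotone_nat_of_le_succ
      intro t
      rw [hrec t]
      rcases eq_or_lt_of_le (hbound t).2 with h | h
      · rw [h, hfix]
      · have hr := hratio (x t) xstar (hbound t).1 h
        rw [hfix] at hr
        rw [mul_comm xstar (x t)] at hr
        exact (lt_of_mul_lt_mul_right hr hxs0.le).le
    have hbdd : BddAbove (Set.range x) := ⟨xstar, by rintro _ ⟨t, rfl⟩; exact (hbound t).2⟩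
    have hlim := tendsto_atTop_ciSup hmonox hbdd
    have hLpos : 0 < ⨆ i, x i := lt_of_lt_of_le hx0 (le_ciSup hbdd 0)
    have hL := hlimfix x _ hLpos hrec hlim
    rwa [hL] at hlim
  · -- constant sequence
    have hall : ∀ t, x t = xstar := by
      intro t
      induction t with
      | zero => exact hcase
      | succ n ih => rw [hrec n, ih, hfix]
    have hx : x = fun _ => xstar := funext hall
    rw [hx]
    exact tendsto_const_nhds
  · -- decreasing towards xstar
    have hbound : ∀ t, xstar ≤ x t := by
      intro t
      induction t with
      | zero => exact hcase.le
      | succ n ih =>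
        rw [hrec n]
        have := hmono' xstar (x n) hxs0.le ih
        rwa [hfix] at this
    have hanti : Antitone x := by
      apply antitone_nat_of_succ_le
      intro t
      rw [hrec t]
      rcases eq_or_lt_of_le (hbound t) with h | h
      · rw [← h, hfix]
      · have hr := hratio xstar (x t) hxs0 h
        rw [hfix] at hr
        rw [mul_comm xstar (x t)] at hr
        exact (lt_of_mul_lt_mul_right hr hxs0.le).le
    have hbdd : BddBelow (Set.range x) := ⟨xstar, by rintro _ ⟨t, rfl⟩; exact hbound t⟩
    have hlim := tendsto_atTop_ciInf hanti hbdd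
    have hLpos : 0 < ⨅ i, x i := lt_of_lt_of_le hxs0 (le_ciInf hbound)
    have hL := hlimfix x _ hLpos hrec hlim
    rwa [hL] at hlim
end
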